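/- For every fixed positive integer d, the sequence \Gamma(d) = { 1/((i+1)!(d+1-i)!) }_{i \ge 0} is a multiplier sequence: for any real polynomial f(t) = \sum a_i t^i having only real roots, the polynomial \sum a_i t^i / ((i+1)!(d+1-i)!) is either identically zero or has only real roots. -/

import Mathlib

open Polynomial


lemma exists_root_of_pos_lc (q : Polynomial ℝ) (h : Odd q.natDegree) (hlc : 0 ≤ q.leadingCoeff) :
    ∃ x : ℝ, q.eval x = 0 := by
  have hq : q ≠ 0 := by rintro rfl; simp at h
  have hnd : q.natDegree ≠ 0 := by rintro h0; rw [h0] at h; simp at h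
  have hdeg : 0 < q.degree := natDegree_pos_iff_degree_pos.mp (Nat.pos_of_ne_zero hnd)
  have htop : Filter.Tendsto (fun x => q.eval x) Filter.atTop Filter.atTop :=
    q.tendsto_atTop_of_leadingCoeff_nonneg hdeg hlc
  have hbot : Filter.Tendsto (fun x => q.eval x) Filter.atBot Filter.atBot := by
    have hndc : ((-X : ℝ[X])).natDegree = 1 := by simp [natDegree_neg]
    have h2 : Filter.Tendsto (fun x => (q.comp (-X)).eval x) Filter.atTop Filter.atBot := by
      apply tendsto_atBot_of_leadingCoeff_nonpos
      · have hc0 : q.comp (-X) ≠ 0 := fun hc => by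
          have := natDegree_comp (p := q) (q := -X)
          rw [hc, natDegree_zero, hndc, mul_one] at this
          exact hnd this.symm
        rw [degree_eq_natDegree hc0]
        have : (q.comp (-X)).natDegree = q.natDegree := by rw [natDegree_comp, hndc, mul_one]
        rw [this]
        exact_mod_cast natDegree_pos_iff_degree_pos.mpr hdeg
      · have : (q.comp (-X)).leadingCoeff = q.leadingCoeff * ((-X : ℝ[X]).leadingCoeff) ^ q.natDegree := leadingCoeff_comp (by simp [hndc])
        rw [this]
        have : ((-X : ℝ[X])).leadingCoeff = -1 := by simp [leadingCoeff_neg]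
        rw [this]
        rcases h with ⟨k, hk⟩
        rw [hk, pow_succ, pow_mul]
        simp only [neg_one_sq, one_pow, one_mul]
        nlinarith [hlc]
    have h3 : ∀ x : ℝ, (q.comp (-X)).eval x = q.eval (-x) := by
      intro x; simp [eval_comp]
    have h4 := h2.comp (Filter.tendsto_neg_atBot_atTop (G := ℝ))
    have h5 : (fun x : ℝ => (q.comp (-X)).eval (-x)) = fun x => q.eval (-(-x)) := by
      funext x; rw [h3]
    have h6 : ((fun x => (q.comp (-X)).eval x) ∘ (Neg.neg : ℝ → ℝ)) = fun x => q.eval x := by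
      funext x; simp [Function.comp, h3]
    rwa [h6] at h4
  obtain ⟨b, hb⟩ := (htop.eventually_ge_atTop 1).exists
  obtain ⟨a, ha, hab⟩ := ((hbot.eventually_le_atBot (-1)).and (Filter.eventually_lt_atBot b)).exists
  have : (0:ℝ) ∈ Set.Icc (q.eval a) (q.eval b) := ⟨by linarith, by linarith⟩
  obtain ⟨x, _, hx⟩ := intermediate_value_Icc hab.le (q.continuousOn (s := Set.Icc a b)) this
  exact ⟨x, hx⟩

lemma odd_natDegree_exists_root (q : Polynomial ℝ) (h : Odd q.natDegree) :
    ∃ x : ℝ, q.eval x = 0 := by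
  rcases le_or_gt 0 q.leadingCoeff with hlc | hlc
  · exact exists_root_of_pos_lc q h hlc
  · obtain ⟨x, hx⟩ := exists_root_of_pos_lc (-q) (by simpa using h) (by rw [leadingCoeff_neg]; linarith)
    exact ⟨x, by simpa using hx⟩

/-- parity: natDegree - #roots is even for real polynomials -/
lemma even_natDegree_sub_card_roots (q : Polynomial ℝ) (hq : q ≠ 0) :
    Even (q.natDegree - Multiset.card q.roots) := by
  by_cases hr : q.roots = 0
  · rw [hr]
    simp only [Multiset.card_zero, Nat.sub_zero]
    by_contra hodd
    rw [Nat.not_even_iff_odd] at hodd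
    obtain ⟨x, hx⟩ := odd_natDegree_exists_root q hodd
    have : x ∈ q.roots := by rw [mem_roots hq]; exact hx
    rw [hr] at this; simp at this
  · obtain ⟨x, hx⟩ := Multiset.exists_mem_of_ne_zero hr
    have hroot : q.eval x = 0 := (mem_roots hq).mp hx
    obtain ⟨p, hp⟩ := (dvd_iff_isRoot.mpr hroot)
    have hp0 : p ≠ 0 := by rintro rfl; rw [mul_zero] at hp; exact hq hp
    have hXC : (X - C x : ℝ[X]) ≠ 0 := X_sub_C_ne_zero x
    have hdeg : q.natDegree = p.natDegree + 1 := by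
      rw [hp, natDegree_mul hXC hp0, natDegree_X_sub_C, add_comm]
    have hroots : q.roots = p.roots + {x} := by
      rw [hp, roots_mul (hp ▸ hq), roots_X_sub_C, add_comm]
    have := even_natDegree_sub_card_roots p hp0
    rw [hdeg, hroots]
    simpa using this
termination_by q.natDegree
decreasing_by
  rw [hdeg]; omega

/-- all complex roots real implies full real root count -/
lemma card_roots_of_real_roots (p : Polynomial ℝ) (hp : p ≠ 0)
    (h : ∀ z : ℂ, aeval z p = 0 → z.im = 0) :
    Multiset.card p.roots = p.natDegree := by
  by_cases h0 : p.natDegree = 0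
  · have := p.card_roots' ; omega
  · -- complex root exists
    have hmap : p.map (algebraMap ℝ ℂ) ≠ 0 := by
      simpa using (Polynomial.map_ne_zero_iff (algebraMap ℝ ℂ).injective).mpr hp
    have hdegpos : 0 < (p.map (algebraMap ℝ ℂ)).degree := by
      rw [degree_map_eq_of_injective (algebraMap ℝ ℂ).injective]
      exact natDegree_pos_iff_degree_pos.mp (Nat.pos_of_ne_zero h0)
    obtain ⟨z, hz⟩ := Complex.exists_root hdegpos
    have hz' : aeval z p = 0 := by rwa [aeval_def, ← eval_map]
    have him : z.im = 0 := h z hz'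
    set x := z.re with hx
    have hzx : z = (x : ℂ) := Complex.ext rfl (by simp [him])
    have hevalx : p.eval x = 0 := by
      have : aeval ((algebraMap ℝ ℂ) x) p = 0 := by
        have : ((algebraMap ℝ ℂ) x) = z := by rw [hzx]; rfl
        rw [this]; exact hz'
      rw [aeval_algebraMap_apply] at this
      have h2 : (algebraMap ℝ ℂ) (aeval x p) = 0 := this
      have := (algebraMap ℝ ℂ).injective (by simpa using h2)
      simpa [aeval_def] using this
    obtain ⟨q, hq⟩ := dvd_iff_isRoot.mpr hevalx
    have hq0 : q ≠ 0 := by rintro rfl; rw [mul_zero] at hq; exact hp hq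
    have hXC : (X - C x : ℝ[X]) ≠ 0 := X_sub_C_ne_zero x
    have hdeg : p.natDegree = q.natDegree + 1 := by
      rw [hq, natDegree_mul hXC hq0, natDegree_X_sub_C, add_comm]
    have hq' : ∀ z : ℂ, aeval z q = 0 → z.im = 0 := by
      intro w hw
      apply h w
      rw [hq, map_mul, hw, mul_zero]
    have := card_roots_of_real_roots q hq0 hq'
    rw [hdeg, hq, roots_mul (hq ▸ hp), roots_X_sub_C]
    simp [this]
termination_by p.natDegree
decreasing_by rw [hdeg]; omega

/-- converse: full real root count implies all complex roots real -/
lemma real_roots_of_card_roots (p : Polynomial ℝ) (hp : p ≠ 0)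
    (h : Multiset.card p.roots = p.natDegree) :
    ∀ z : ℂ, aeval z p = 0 → z.im = 0 := by
  intro z hz
  have hsplit : p.Splits := splits_iff_card_roots.mpr h
  have hprod := hsplit.eq_prod_roots
  rw [hprod] at hz
  rw [map_mul, aeval_C] at hz
  have hlc : (algebraMap ℝ ℂ) p.leadingCoeff ≠ 0 := by
    simpa using leadingCoeff_ne_zero.mpr hp
  have hmul : (aeval z) (Multiset.map (fun a => X - C a) p.roots).prod = 0 := by
    rcases mul_eq_zero.mp hz with h1 | h1
    · exact absurd h1 hlc
    · exact h1
  rw [map_multiset_prod] at hmul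
  have hmem := Multiset.prod_eq_zero_iff.mp hmul
  rw [Multiset.mem_map] at hmem
  obtain ⟨w, hw, hw0⟩ := hmem
  rw [Multiset.mem_map] at hw
  obtain ⟨r, hr, rfl⟩ := hw
  rw [map_sub, aeval_X, aeval_C] at hw0
  have : z = (algebraMap ℝ ℂ) r := by linear_combination hw0
  rw [this]; simp

/-- Rolle with exponential weight: between two roots of `q` there is a root of `q' - c q`. -/
lemma exists_root_between (q : Polynomial ℝ) (c x y : ℝ) (hxy : x < y)
    (hx : q.eval x = 0) (hy : q.eval y = 0) :
    ∃ z ∈ Set.Ioo x y, (derivative q - C c * q).eval z = 0 := by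
  set F : ℝ → ℝ := fun t => Real.exp (-c * t) * q.eval t with hF
  have hder : ∀ t : ℝ, HasDerivAt F (Real.exp (-c * t) * (derivative q - C c * q).eval t) t := by
    intro t
    have h1 : HasDerivAt (fun s : ℝ => Real.exp (-c * s)) (Real.exp (-c * t) * (-c)) t := by
      have := ((hasDerivAt_id t).const_mul (-c)).exp
      simpa [mul_comm] using this
    have h2 : HasDerivAt (fun s : ℝ => q.eval s) (q.derivative.eval t) t := q.hasDerivAt t
    have := h1.mul h2
    refine this.congr_deriv ?_
    simp only [eval_sub, eval_mul, eval_C]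
    ring
  have hcont : ContinuousOn F (Set.Icc x y) := by
    apply Continuous.continuousOn
    exact (Real.continuous_exp.comp (continuous_const.mul continuous_id)).mul q.continuous
  have hFx : F x = F y := by simp [hF, hx, hy]
  obtain ⟨z, hz, hz0⟩ := exists_hasDerivAt_eq_zero hxy hcont hFx (fun t _ => hder t)
  refine ⟨z, hz, ?_⟩
  have hexp : Real.exp (-c * z) ≠ 0 := Real.exp_ne_zero _
  exact (mul_eq_zero.mp hz0).resolve_left hexp

/-- root multiplicity drops by at most one -/
lemma rootMult_step (q : Polynomial ℝ) (c x : ℝ) (hw : derivative q - C c * q ≠ 0) :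
    q.rootMultiplicity x - 1 ≤ (derivative q - C c * q).rootMultiplicity x := by
  set m := q.rootMultiplicity x with hm
  rcases Nat.eq_zero_or_pos m with h0 | hpos
  · simp [h0]
  have hdvd : (X - C x) ^ m ∣ q := q.pow_rootMultiplicity_dvd x
  have hd1 : (X - C x) ^ (m - 1) ∣ derivative q :=
    pow_sub_one_dvd_derivative_of_pow_dvd hdvd
  have hd2 : (X - C x) ^ (m - 1) ∣ q := dvd_trans (pow_dvd_pow _ (Nat.sub_le m 1)) (q.pow_rootMultiplicity_dvd x)
  have hd : (X - C x) ^ (m - 1) ∣ derivative q - C c * q :=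
    dvd_sub hd1 (Dvd.dvd.mul_left hd2 _)
  exact (le_rootMultiplicity_iff hw).mpr hd

/-- interleaving count for `q' - c q` -/
lemma card_toFinset_le (q : Polynomial ℝ) (c : ℝ) (hq : q ≠ 0) (hw : derivative q - C c * q ≠ 0) :
    q.roots.toFinset.card ≤ ((derivative q - C c * q).roots.toFinset \ q.roots.toFinset).card + 1 := by
  refine Finset.card_le_diff_of_interleaved fun x hx y hy hxy _ => ?_
  rw [Multiset.mem_toFinset, mem_roots hq] at hx hy
  obtain ⟨z, hz1, hz2⟩ := exists_root_between q c x y hxy hx hy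
  exact ⟨z, by rw [Multiset.mem_toFinset, mem_roots hw]; exact hz2, hz1⟩

/-- counted-with-multiplicity version -/
lemma card_roots_le_step (q : Polynomial ℝ) (c : ℝ) (hq : q ≠ 0) (hw : derivative q - C c * q ≠ 0) :
    Multiset.card q.roots ≤ Multiset.card (derivative q - C c * q).roots + 1 := by
  set w := derivative q - C c * q with hwdef
  calc
    Multiset.card q.roots = ∑ x ∈ q.roots.toFinset, q.roots.count x :=
      (Multiset.toFinset_sum_count_eq _).symm
    _ = ∑ x ∈ q.roots.toFinset, (q.roots.count x - 1 + 1) :=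
      (Eq.symm <| Finset.sum_congr rfl fun _ hx => tsub_add_cancel_of_le <|
        Nat.succ_le_iff.2 <| Multiset.count_pos.2 <| Multiset.mem_toFinset.1 hx)
    _ = (∑ x ∈ q.roots.toFinset, (q.rootMultiplicity x - 1)) + q.roots.toFinset.card := by
      simp only [Finset.sum_add_distrib, Finset.card_eq_sum_ones, count_roots]
    _ ≤ (∑ x ∈ q.roots.toFinset, w.rootMultiplicity x) +
          ((w.roots.toFinset \ q.roots.toFinset).card + 1) :=
      (add_le_add
        (Finset.sum_le_sum fun x _ => rootMult_step q c x hw)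
        (card_toFinset_le q c hq hw))
    _ ≤ (∑ x ∈ q.roots.toFinset, w.roots.count x) +
          ((∑ x ∈ w.roots.toFinset \ q.roots.toFinset, w.roots.count x) + 1) := by
      simp only [← count_roots]
      refine add_le_add_right (add_le_add_left ((Finset.card_eq_sum_ones _).trans_le ?_) _) _
      refine Finset.sum_le_sum fun x hx => Nat.succ_le_iff.2 <| ?_
      rw [Multiset.count_pos, ← Multiset.mem_toFinset]
      exact (Finset.mem_sdiff.1 hx).1
    _ = Multiset.card w.roots + 1 := by
      rw [← add_assoc, ← Finset.sum_union Finset.disjoint_sdiff, Finset.union_sdiff_self_eq_union, ←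
        Multiset.toFinset_sum_count_eq, ← Finset.sum_subset Finset.subset_union_right]
      intro x _ hx₂
      simpa only [Multiset.mem_toFinset, Multiset.count_eq_zero] using hx₂

/-- real-rootedness (counted with multiplicity), allowing the zero polynomial -/
def RR (p : Polynomial ℝ) : Prop := p = 0 ∨ Multiset.card p.roots = p.natDegree

lemma RR_step (q : Polynomial ℝ) (c : ℝ) (h : RR q) : RR (derivative q - C c * q) := by
  rcases h with rfl | hcard
  · left; simp
  by_cases hq : q = 0
  · left; simp [hq]
  set w := derivative q - C c * q with hwdef
  by_cases hw : w = 0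
  · left; exact hw
  right
  have h1 : Multiset.card q.roots ≤ Multiset.card w.roots + 1 := card_roots_le_step q c hq hw
  have h2 : Multiset.card w.roots ≤ w.natDegree := w.card_roots'
  have h3 : w.natDegree ≤ q.natDegree := by
    apply le_trans (natDegree_sub_le _ _)
    simp only [max_le_iff]
    constructor
    · exact le_trans (natDegree_derivative_le q) (Nat.sub_le _ _)
    · exact le_trans (natDegree_mul_le) (by simp)
  have h4 := even_natDegree_sub_card_roots w hw
  obtain ⟨k, hk⟩ := h4
  omega


noncomputable def Dend : Module.End ℝ (Polynomial ℝ) := Polynomial.derivative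

lemma Dend_apply (p : Polynomial ℝ) : Dend p = derivative p := rfl

lemma aevalD_mul_step (c : ℝ) (h p : Polynomial ℝ) :
    (aeval Dend ((X - C c) * h)) p = derivative ((aeval Dend h) p) - C c * ((aeval Dend h) p) := by
  rw [map_mul, map_sub, aeval_X, aeval_C]
  set u := (aeval Dend h) p with hu
  have : ((Dend - algebraMap ℝ (Module.End ℝ (Polynomial ℝ)) c) * aeval Dend h) p
      = (Dend - algebraMap ℝ (Module.End ℝ (Polynomial ℝ)) c) u := rfl
  rw [this]
  rw [LinearMap.sub_apply, Dend_apply]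
  congr 1
  show c • u = C c * u
  rw [smul_eq_C_mul]

lemma RR_smul (a : ℝ) (p : Polynomial ℝ) (hp : RR p) : RR (a • p) := by
  rcases eq_or_ne a 0 with rfl | ha
  · left; simp
  rcases hp with rfl | h
  · left; simp
  right
  rw [roots_smul_nonzero p ha]
  rw [smul_eq_C_mul, natDegree_C_mul ha]
  exact h

lemma RR_multiset (s : Multiset ℝ) : ∀ p : Polynomial ℝ, RR p →
    RR ((aeval Dend (s.map (fun r => X - C r)).prod) p) := by
  induction s using Multiset.induction with
  | empty => intro p hp; simpa [Module.End.one_apply] using hp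
  | cons a s ih =>
    intro p hp
    rw [Multiset.map_cons, Multiset.prod_cons, aevalD_mul_step]
    exact RR_step _ a (ih p hp)

lemma RR_aevalD (h p : Polynomial ℝ) (hh : h ≠ 0)
    (hcard : Multiset.card h.roots = h.natDegree) (hp : RR p) :
    RR ((aeval Dend h) p) := by
  have hsplit : h.Splits := splits_iff_card_roots.mpr hcard
  have hprod := hsplit.eq_prod_roots
  have : (aeval Dend h) p = h.leadingCoeff • ((aeval Dend ((h.roots.map (fun r => X - C r)).prod)) p) := by
    conv_lhs => rw [hprod]
    rw [map_mul, aeval_C]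
    rfl
  rw [this]
  exact RR_smul _ _ (RR_multiset h.roots p hp)


lemma RR_reflect (N : ℕ) (p : Polynomial ℝ) (hN : p.natDegree ≤ N) (hp : RR p) : RR (reflect N p) := by
  rcases hp with rfl | hcard
  · left; simp
  by_cases h0 : p = 0
  · left; simp [h0]
  right
  have hrefl0 : reflect N p ≠ 0 := fun hc => h0 (reflect_eq_zero_iff.mp hc)
  apply card_roots_of_real_roots _ hrefl0
  intro z hz
  rcases eq_or_ne z 0 with rfl | hzne
  · simp
  · letI : Invertible (z⁻¹) := invertibleOfNonzero (inv_ne_zero hzne)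
    have hkey := eval₂_reflect_mul_pow (algebraMap ℝ ℂ) (z⁻¹) N p ?deg
    case deg => exact hN
    have hinv : (⅟ (z⁻¹) : ℂ) = z := by
      have : (z⁻¹ : ℂ) * z = 1 := inv_mul_cancel₀ hzne
      exact invOf_eq_right_inv this
    rw [hinv] at hkey
    have hz' : eval₂ (algebraMap ℝ ℂ) z (reflect N p) = 0 := by rwa [aeval_def] at hz
    rw [hz', zero_mul] at hkey
    have hroot : aeval (z⁻¹) p = 0 := by rw [aeval_def, ← hkey]
    have him : (z⁻¹).im = 0 := real_roots_of_card_roots p h0 hcard _ hroot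
    rw [Complex.inv_im] at him
    have hns : Complex.normSq z ≠ 0 := by
      simpa [Complex.normSq_eq_zero] using hzne
    field_simp at him
    simpa using him



lemma RR_X_pow (k : ℕ) : RR ((X : Polynomial ℝ)^k) := by
  right
  rw [roots_pow, roots_X, natDegree_pow, natDegree_X]
  simp

lemma RR_of_X_mul (W : Polynomial ℝ) (h : RR (X * W)) : RR W := by
  rcases eq_or_ne W 0 with rfl | hW
  · left; rfl
  right
  have hXW : (X : Polynomial ℝ) * W ≠ 0 := mul_ne_zero X_ne_zero hW
  rcases h with h0 | hcard
  · exact absurd h0 hXW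
  rw [roots_mul hXW, roots_X, natDegree_mul X_ne_zero hW, natDegree_X] at hcard
  simp only [Multiset.card_add, Multiset.card_singleton] at hcard
  omega

lemma reflect_sum {s : Finset ℕ} (N : ℕ) (F : ℕ → Polynomial ℝ) :
    reflect N (∑ i ∈ s, F i) = ∑ i ∈ s, reflect N (F i) := by
  classical
  induction s using Finset.induction with
  | empty => simp [reflect_zero]
  | insert a s h ih => rw [Finset.sum_insert h, Finset.sum_insert h, reflect_add, ih]

/-- The main technical theorem, for `n = d+1`. -/
theorem key (n : ℕ) (f : Polynomial ℝ)
    (hf : ∀ z : ℂ, Polynomial.aeval z f = 0 → z.im = 0) :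
    RR (∑ i ∈ Finset.range (f.natDegree + 1),
        Polynomial.C (f.coeff i * (if i ≤ n then
          (1 : ℝ) / ((i + 1).factorial * (n - i).factorial) else 0)) *
          Polynomial.X ^ i) := by
  classical
  set M := f.natDegree with hM
  set γ : ℕ → ℝ := fun i => if i ≤ n then (1 : ℝ) / ((i + 1).factorial * (n - i).factorial) else 0
    with hγ
  by_cases hzero : ∀ i ∈ Finset.range (M + 1), f.coeff i * γ i = 0
  · left
    exact Finset.sum_eq_zero fun i hi => by rw [hzero i hi, map_zero, zero_mul]
  push_neg at hzero
  obtain ⟨i₀, hi₀mem, hi₀⟩ := hzero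
  have hi₀M : i₀ ≤ M := Nat.lt_succ_iff.mp (Finset.mem_range.mp hi₀mem)
  have ha₀ : f.coeff i₀ ≠ 0 := fun hc => hi₀ (by rw [hc, zero_mul])
  have hγ₀ : γ i₀ ≠ 0 := fun hc => hi₀ (by rw [hc, mul_zero])
  have hi₀n : i₀ ≤ n := by
    by_contra hc
    exact hγ₀ (by simp [hγ, hc])
  have hf0 : f ≠ 0 := by
    intro hc
    have := hf Complex.I (by rw [hc]; simp)
    simp [Complex.I_im] at this
  have hfcard : Multiset.card f.roots = M := card_roots_of_real_roots f hf0 hf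
  -- Stage 1 : B = f(D) X^n
  set B : Polynomial ℝ := (aeval Dend f) ((X : Polynomial ℝ)^n) with hBdef
  have hRRB : RR B := RR_aevalD f _ hf0 hfcard (RR_X_pow n)
  have hB : B = ∑ i ∈ Finset.range (M + 1),
      (f.coeff i * (n.descFactorial i : ℝ)) • (X : Polynomial ℝ)^(n - i) := by
    rw [hBdef, aeval_eq_sum_range, LinearMap.sum_apply]
    apply Finset.sum_congr rfl
    intro i _
    rw [LinearMap.smul_apply, Module.End.pow_apply]
    show f.coeff i • (derivative^[i] ((X : Polynomial ℝ)^n)) = _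
    rw [iterate_derivative_X_pow_eq_smul, smul_smul]
  set K := min M n with hK
  have hBK : B = ∑ i ∈ Finset.range (K + 1),
      (f.coeff i * (n.descFactorial i : ℝ)) • (X : Polynomial ℝ)^(n - i) := by
    rw [hB]
    apply (Finset.sum_subset (Finset.range_subset_range.mpr (by omega)) _).symm
    intro i hiM hiK
    rw [Finset.mem_range] at hiM hiK
    have hni : n < i := by omega
    rw [Nat.descFactorial_eq_zero_iff_lt.mpr hni]
    simp
  -- Stage 2 : C' = reflect n B
  set C' : Polynomial ℝ := ∑ i ∈ Finset.range (K + 1),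
      (f.coeff i * (n.descFactorial i : ℝ)) • (X : Polynomial ℝ)^i with hC'def
  have hC'eq : reflect n B = C' := by
    rw [hBK, reflect_sum, hC'def]
    apply Finset.sum_congr rfl
    intro i hi
    rw [Finset.mem_range] at hi
    have hin : i ≤ n := by omega
    rw [smul_eq_C_mul, smul_eq_C_mul, reflect_C_mul_X_pow,
      revAt_le (Nat.sub_le n i), Nat.sub_sub_self hin]
  have hBdeg : B.natDegree ≤ n := by
    rw [hBK]
    apply Polynomial.natDegree_sum_le_of_forall_le
    intro i _
    exact le_trans (natDegree_smul_le _ _) (by simp [Nat.sub_le])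
  have hRRC' : RR C' := hC'eq ▸ RR_reflect n B hBdeg hRRB
  have hC'coeff : ∀ j, j ≤ K → C'.coeff j = f.coeff j * (n.descFactorial j : ℝ) := by
    intro j hj
    rw [hC'def, finset_sum_coeff]
    rw [Finset.sum_eq_single j]
    · rw [coeff_smul, coeff_X_pow, if_pos rfl, smul_eq_mul, mul_one]
    · intro i _ hij
      rw [coeff_smul, coeff_X_pow, if_neg (Ne.symm hij), smul_eq_mul, mul_zero]
    · intro hc
      exact absurd (Finset.mem_range.mpr (by omega)) hc
  have hC'deg : C'.natDegree ≤ K := by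
    rw [hC'def]
    apply Polynomial.natDegree_sum_le_of_forall_le
    intro i hi
    rw [Finset.mem_range] at hi
    exact le_trans (natDegree_smul_le _ _) (by simp; omega)
  have hC'0 : C' ≠ 0 := by
    intro hc
    have h1 : C'.coeff i₀ = 0 := by rw [hc]; simp
    rw [hC'coeff i₀ (by omega)] at h1
    have hd0 : (n.descFactorial i₀ : ℝ) ≠ 0 := by
      have := Nat.descFactorial_eq_zero_iff_lt (n := n) (k := i₀)
      have hpos : n.descFactorial i₀ ≠ 0 := by
        intro hc2; rw [this] at hc2; omega
      exact_mod_cast Nat.cast_ne_zero.mpr hpos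
    exact ha₀ (by
      rcases mul_eq_zero.mp h1 with h | h
      · exact h
      · exact absurd h hd0)
  set m := C'.natDegree with hm
  have hmK : m ≤ K := hC'deg
  have hC'card : Multiset.card C'.roots = m := by
    rcases hRRC' with h | h
    · exact absurd h hC'0
    · exact h
  -- Stage 3 : reflect m C', then apply to X^(m+1)
  set R' : Polynomial ℝ := reflect m C' with hR'def
  have hR'0 : R' ≠ 0 := fun hc => hC'0 (reflect_eq_zero_iff.mp hc)
  have hRRR' : RR R' := RR_reflect m C' le_rfl hRRC'
  have hR'card : Multiset.card R'.roots = R'.natDegree := by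
    rcases hRRR' with h | h
    · exact absurd h hR'0
    · exact h
  have hR'deg : R'.natDegree ≤ m := by
    apply Polynomial.natDegree_le_iff_coeff_eq_zero.mpr
    intro k hk
    rw [hR'def, coeff_reflect]
    have : revAt m k = k := revAt_eq_self_of_lt hk
    rw [this]
    exact coeff_eq_zero_of_natDegree_lt hk
  set E : Polynomial ℝ := (aeval Dend R') ((X : Polynomial ℝ)^(m+1)) with hEdef
  have hRRE : RR E := RR_aevalD R' _ hR'0 hR'card (RR_X_pow (m+1))
  have hE : E = ∑ j ∈ Finset.range (m + 1),
      (C'.coeff j * (((m+1).descFactorial (m - j)) : ℝ)) • (X : Polynomial ℝ)^(j+1) := by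
    rw [hEdef, aeval_eq_sum_range' (Nat.lt_succ_of_le hR'deg), LinearMap.sum_apply]
    rw [← Finset.sum_range_reflect]
    apply Finset.sum_congr rfl
    intro j hj
    rw [Finset.mem_range] at hj
    have hjm : j ≤ m := by omega
    rw [LinearMap.smul_apply, Module.End.pow_apply]
    show R'.coeff (m + 1 - 1 - j) • (derivative^[m + 1 - 1 - j] ((X : Polynomial ℝ)^(m+1))) = _
    have h1 : m + 1 - 1 - j = m - j := by omega
    rw [h1, iterate_derivative_X_pow_eq_smul, smul_smul]
    have h2 : R'.coeff (m - j) = C'.coeff j := by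
      rw [hR'def, coeff_reflect, revAt_le (Nat.sub_le m j), Nat.sub_sub_self hjm]
    rw [h2]
    have h3 : m + 1 - (m - j) = j + 1 := by omega
    rw [h3]
  set W : Polynomial ℝ := ∑ j ∈ Finset.range (m + 1),
      (C'.coeff j * (((m+1).descFactorial (m - j)) : ℝ)) • (X : Polynomial ℝ)^j with hWdef
  have hEW : E = X * W := by
    rw [hE, hWdef, Finset.mul_sum]
    apply Finset.sum_congr rfl
    intro j _
    rw [smul_eq_C_mul, smul_eq_C_mul]
    ring
  have hRRW : RR W := RR_of_X_mul W (hEW ▸ hRRE)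
  -- Final identification
  set s : ℝ := ((n.factorial : ℝ) * ((m+1).factorial : ℝ))⁻¹ with hs
  have hvanish : ∀ j, m < j → j ≤ M → f.coeff j * γ j = 0 := by
    intro j hjm hjM
    by_cases hjn : j ≤ n
    · have hjK : j ≤ K := by omega
      have hCj : C'.coeff j = 0 := coeff_eq_zero_of_natDegree_lt (by omega)
      have h5 := hC'coeff j hjK
      rw [hCj] at h5
      rcases mul_eq_zero.mp h5.symm with h | h
      · rw [h, zero_mul]
      · exfalso
        have h6 : n.descFactorial j ≠ 0 := by
          intro hc2; rw [Nat.descFactorial_eq_zero_iff_lt] at hc2; omega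
        exact h6 (by exact_mod_cast h)
    · have h7 : γ j = 0 := by simp [hγ, hjn]
      rw [h7, mul_zero]
  have hgoal : (∑ i ∈ Finset.range (M + 1), Polynomial.C (f.coeff i * γ i) * X ^ i) = s • W := by
    rw [hWdef, Finset.smul_sum]
    apply (Finset.sum_subset (Finset.range_subset_range.mpr (by omega : m + 1 ≤ M + 1)) _).symm.trans
    · apply Finset.sum_congr rfl
      intro j hj
      rw [Finset.mem_range] at hj
      have hjm : j ≤ m := by omega
      have hjK : j ≤ K := le_trans hjm hmK
      have hjn : j ≤ n := by omega
      rw [smul_smul, smul_eq_C_mul]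
      congr 2
      rw [hC'coeff j hjK]
      have e1 : ((n - j).factorial : ℝ) * (n.descFactorial j : ℝ) = (n.factorial : ℝ) := by
        exact_mod_cast congrArg (Nat.cast (R := ℝ)) (Nat.factorial_mul_descFactorial hjn)
      have e2 : ((j + 1).factorial : ℝ) * (((m+1).descFactorial (m - j)) : ℝ)
          = ((m+1).factorial : ℝ) := by
        have h4 : m + 1 - (m - j) = j + 1 := by omega
        have := Nat.factorial_mul_descFactorial (n := m + 1) (k := m - j) (by omega)
        rw [h4] at this
        exact_mod_cast congrArg (Nat.cast (R := ℝ)) this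
      have e3 : (n.descFactorial j : ℝ) * (((m+1).descFactorial (m - j)) : ℝ)
          * (((j+1).factorial : ℝ) * ((n-j).factorial : ℝ))
          = (n.factorial : ℝ) * ((m+1).factorial : ℝ) := by
        linear_combination ((((m+1).descFactorial (m-j)) : ℝ) * (((j+1).factorial : ℝ))) * e1
          + (n.factorial : ℝ) * e2
      have hγj : γ j = 1 / (((j + 1).factorial : ℝ) * ((n - j).factorial : ℝ)) := by
        simp only [hγ, if_pos hjn]
        try push_cast
        try ring
      rw [hγj, hs]
      have hfac1 : ((j+1).factorial : ℝ) ≠ 0 := by positivity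
      have hfac2 : ((n-j).factorial : ℝ) ≠ 0 := by positivity
      have hfac3 : (n.factorial : ℝ) ≠ 0 := by positivity
      have hfac4 : ((m+1).factorial : ℝ) ≠ 0 := by positivity
      field_simp
      linear_combination (-(f.coeff j)) * e3
    · intro j hjM hjm
      rw [Finset.mem_range] at hjM hjm
      rw [hvanish j (by omega) (by omega)]
      simp
  rw [hgoal]
  exact RR_smul s W hRRW

/-- For every fixed positive integer `d`, the sequence
`Γ(d) = { 1/((i+1)!(d+1-i)!) }` (with the convention `1/(d+1-i)! = 0` for `i > d+1`) is a
multiplier sequence: for any real polynomial `f` having only real roots, the polynomial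
obtained by multiplying the `i`-th coefficient of `f` by `1/((i+1)!(d+1-i)!)` is either
identically zero or has only real roots. -/
theorem gamma_multiplier_sequence (d : ℕ) (hd : 0 < d) (f : Polynomial ℝ)
    (hf : ∀ z : ℂ, Polynomial.aeval z f = 0 → z.im = 0) :
    (∑ i ∈ Finset.range (f.natDegree + 1),
        Polynomial.C (f.coeff i * (if i ≤ d + 1 then
          (1 : ℝ) / ((i + 1).factorial * (d + 1 - i).factorial) else 0)) *
          Polynomial.X ^ i) = 0 ∨
      ∀ z : ℂ, Polynomial.aeval z (∑ i ∈ Finset.range (f.natDegree + 1),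
        Polynomial.C (f.coeff i * (if i ≤ d + 1 then
          (1 : ℝ) / ((i + 1).factorial * (d + 1 - i).factorial) else 0)) *
          Polynomial.X ^ i) = 0 → z.im = 0 := by
  have h := key (d + 1) f hf
  set g := ∑ i ∈ Finset.range (f.natDegree + 1),
      Polynomial.C (f.coeff i * (if i ≤ d + 1 then
        (1 : ℝ) / ((i + 1).factorial * (d + 1 - i).factorial) else 0)) *
        Polynomial.X ^ i with hg
  rcases h with h0 | hcard
  · left; exact h0
  · by_cases hgz : g = 0
    · left; exact hgz
    · right; exact real_roots_of_card_roots g hgz hcard
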